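/- Minimizing the value function V(E,P,D) = L_P(P,E) − λ·L_D(D,E;P) over P for fixed E, followed by maximizing over D, yields the virtual value function V(E) = H(y|E(x)) − λ·H(z | E(x), q_y(·|E(x))). -/

import Mathlib

open Finset

/-- Probability of the event `f x = t` under the joint pmf `q` on `X × Z`. -/
noncomputable def fiberPr {X Z T : Type*} [Fintype X] [Fintype Z] [DecidableEq T]
    (q : X × Z → ℝ) (f : X → T) (t : T) : ℝ :=
  ∑ x, ∑ z, if f x = t then q (x, z) else 0

/-- Conditional pmf of `z` given the event `f x = t`. -/
noncomputable def fiberCond {X Z T : Type*} [Fintype X] [Fintype Z] [DecidableEq T]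
    (q : X × Z → ℝ) (f : X → T) (t : T) (z : Z) : ℝ :=
  (∑ x, if f x = t then q (x, z) else 0) / fiberPr q f t

/-- Conditional Shannon entropy `H(z | f(x))` for the joint pmf `q` on `X × Z`. -/
noncomputable def condEnt {X Z T : Type*} [Fintype X] [Fintype Z] [DecidableEq T]
    (q : X × Z → ℝ) (f : X → T) : ℝ :=
  ∑ t ∈ Finset.image f Finset.univ,
    fiberPr q f t *
      ∑ z, fiberCond q f t z * (-Real.log (fiberCond q f t z))

section Aux

variable {X Z T : Type*} [Fintype X] [Fintype Z] [DecidableEq T]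

/-- Unnormalized fiber weight: mass of `z` within the fiber `g x = t`. -/
noncomputable def fiberW (m : X × Z → ℝ) (g : X → T) (t : T) (z : Z) : ℝ :=
  ∑ x, if g x = t then m (x, z) else 0

lemma fiberPr_eq_sum_W (m : X × Z → ℝ) (g : X → T) (t : T) :
    fiberPr m g t = ∑ z, fiberW m g t z :=
  Finset.sum_comm

lemma fiberW_nonneg (m : X × Z → ℝ) (g : X → T) (hm : ∀ p, 0 ≤ m p) (t : T) (z : Z) :
    0 ≤ fiberW m g t z := by
  refine Finset.sum_nonneg fun x _ => ?_
  split
  · exact hm _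
  · exact le_refl 0

lemma fiberPr_nonneg (m : X × Z → ℝ) (g : X → T) (hm : ∀ p, 0 ≤ m p) (t : T) :
    0 ≤ fiberPr m g t := by
  rw [fiberPr_eq_sum_W]
  exact Finset.sum_nonneg fun z _ => fiberW_nonneg m g hm t z

lemma fiberPr_pos (m : X × Z → ℝ) (g : X → T) (hm : ∀ p, 0 ≤ m p)
    (hfib : ∀ x, 0 < ∑ z, m (x, z)) (x : X) : 0 < fiberPr m g (g x) := by
  rw [fiberPr_eq_sum_W]
  have h1 : ∀ z, m (x, z) ≤ fiberW m g (g x) z := by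
    intro z
    have : m (x, z) = if g x = g x then m (x, z) else 0 := by simp
    rw [this, fiberW]
    refine Finset.single_le_sum (f := fun x' => if g x' = g x then m (x', z) else 0)
      (fun x' _ => ?_) (Finset.mem_univ x)
    split
    · exact hm _
    · exact le_refl 0
  calc (0:ℝ) < ∑ z, m (x, z) := hfib x
    _ ≤ ∑ z, fiberW m g (g x) z := Finset.sum_le_sum fun z _ => h1 z

lemma fiberPr_pos_of_mem (m : X × Z → ℝ) (g : X → T) (hm : ∀ p, 0 ≤ m p)
    (hfib : ∀ x, 0 < ∑ z, m (x, z)) {t : T} (ht : t ∈ Finset.image g Finset.univ) :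
    0 < fiberPr m g t := by
  obtain ⟨x, _, rfl⟩ := Finset.mem_image.mp ht
  exact fiberPr_pos m g hm hfib x

/-- Regrouping a sum over `x` into a sum over fibers of `g`. -/
lemma regroup (m : X × Z → ℝ) (g : X → T) (f : T → Z → ℝ) :
    ∑ x, ∑ z, m (x, z) * f (g x) z
      = ∑ t ∈ Finset.image g Finset.univ, ∑ z, fiberW m g t z * f t z := by
  symm
  calc ∑ t ∈ Finset.image g Finset.univ, ∑ z, fiberW m g t z * f t z
      = ∑ t ∈ Finset.image g Finset.univ, ∑ z, ∑ x,
          if g x = t then m (x, z) * f t z else 0 := by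
        refine Finset.sum_congr rfl fun t _ => Finset.sum_congr rfl fun z _ => ?_
        rw [fiberW, Finset.sum_mul]
        refine Finset.sum_congr rfl fun x _ => ?_
        split <;> simp
    _ = ∑ t ∈ Finset.image g Finset.univ, ∑ x, ∑ z,
          if g x = t then m (x, z) * f t z else 0 :=
        Finset.sum_congr rfl fun t _ => Finset.sum_comm
    _ = ∑ x, ∑ t ∈ Finset.image g Finset.univ, ∑ z,
          if g x = t then m (x, z) * f t z else 0 := Finset.sum_comm
    _ = ∑ x, ∑ z, ∑ t ∈ Finset.image g Finset.univ,
          if g x = t then m (x, z) * f t z else 0 :=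
        Finset.sum_congr rfl fun x _ => Finset.sum_comm
    _ = ∑ x, ∑ z, m (x, z) * f (g x) z := by
        refine Finset.sum_congr rfl fun x _ => Finset.sum_congr rfl fun z _ => ?_
        rw [Finset.sum_ite_eq, if_pos (Finset.mem_image_of_mem g (Finset.mem_univ x))]

lemma condEnt_eq (m : X × Z → ℝ) (g : X → T) (hm : ∀ p, 0 ≤ m p)
    (hfib : ∀ x, 0 < ∑ z, m (x, z)) :
    condEnt m g = ∑ t ∈ Finset.image g Finset.univ, ∑ z,
      fiberW m g t z * (-Real.log (fiberW m g t z / fiberPr m g t)) := by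
  rw [condEnt]
  refine Finset.sum_congr rfl fun t ht => ?_
  have hs : 0 < fiberPr m g t := fiberPr_pos_of_mem m g hm hfib ht
  rw [Finset.mul_sum]
  refine Finset.sum_congr rfl fun z _ => ?_
  have hc : fiberCond m g t z = fiberW m g t z / fiberPr m g t := rfl
  rw [hc, ← mul_assoc, mul_div_cancel₀ _ hs.ne']

/-- Gibbs' inequality: cross entropy dominates entropy (unnormalized weights). -/
lemma gibbs_le (w P : Z → ℝ) (hw : ∀ z, 0 ≤ w z) (hP : ∀ z, 0 < P z)
    (hP1 : ∑ z, P z = 1) (s : ℝ) (hs : s = ∑ z, w z) (hspos : 0 < s) :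
    ∑ z, w z * (-Real.log (w z / s)) ≤ ∑ z, w z * (-Real.log (P z)) := by
  have key : ∀ z, w z * (-Real.log (w z / s))
      ≤ w z * (-Real.log (P z)) + (s * P z - w z) := by
    intro z
    rcases eq_or_lt_of_le (hw z) with h0 | h0
    · rw [← h0]
      simpa using mul_nonneg hspos.le (hP z).le
    · have ht : 0 < P z * s / w z := div_pos (mul_pos (hP z) hspos) h0
      have h1 := Real.log_le_sub_one_of_pos ht
      have hlog : Real.log (P z * s / w z)
          = Real.log (P z) - Real.log (w z / s) := by
        rw [Real.log_div (mul_pos (hP z) hspos).ne' h0.ne', Real.log_mul (hP z).ne' hspos.ne',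
          Real.log_div h0.ne' hspos.ne']
        ring
      rw [hlog] at h1
      have h3 := mul_le_mul_of_nonneg_left h1 h0.le
      have h4 : w z * (P z * s / w z - 1) = s * P z - w z := by
        field_simp
      nlinarith [h3, h4]
  calc ∑ z, w z * (-Real.log (w z / s))
      ≤ ∑ z, (w z * (-Real.log (P z)) + (s * P z - w z)) :=
        Finset.sum_le_sum fun z _ => key z
    _ = ∑ z, w z * (-Real.log (P z)) + (s * ∑ z, P z - ∑ z, w z) := by
        rw [Finset.sum_add_distrib, Finset.sum_sub_distrib, ← Finset.mul_sum]
    _ = ∑ z, w z * (-Real.log (P z)) := by rw [hP1, ← hs]; ring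

/-- Lower bound: any strictly positive normalized kernel's cross entropy
dominates the conditional entropy. -/
lemma condEnt_le_cross (m : X × Z → ℝ) (g : X → T) (hm : ∀ p, 0 ≤ m p)
    (hfib : ∀ x, 0 < ∑ z, m (x, z)) (K : T → Z → ℝ)
    (hK : ∀ t z, 0 < K t z) (hK1 : ∀ t, ∑ z, K t z = 1) :
    condEnt m g ≤ ∑ x, ∑ z, m (x, z) * (-Real.log (K (g x) z)) := by
  rw [condEnt_eq m g hm hfib, regroup m g (fun t z => -Real.log (K t z))]
  refine Finset.sum_le_sum fun t ht => ?_
  exact gibbs_le (fiberW m g t) (K t) (fiberW_nonneg m g hm t) (hK t) (hK1 t)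
    (fiberPr m g t) (fiberPr_eq_sum_W m g t) (fiberPr_pos_of_mem m g hm hfib ht)

/-- Approximation: the conditional entropy is approached by strictly positive kernels. -/
lemma cross_approx [Nonempty Z] (m : X × Z → ℝ) (g : X → T) (hm : ∀ p, 0 ≤ m p)
    (hfib : ∀ x, 0 < ∑ z, m (x, z)) {δ : ℝ} (hδ : 0 < δ) :
    ∃ K : T → Z → ℝ, (∀ t z, 0 < K t z) ∧ (∀ t, ∑ z, K t z = 1) ∧
      ∑ x, ∑ z, m (x, z) * (-Real.log (K (g x) z)) ≤ condEnt m g + δ := by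
  set n : ℝ := (Fintype.card Z : ℝ) with hn
  have hnpos : 0 < n := by
    rw [hn]
    exact_mod_cast Fintype.card_pos
  set c : ℝ := ((Finset.image g Finset.univ).card : ℝ) with hc
  have hc0 : 0 ≤ c := Nat.cast_nonneg _
  set ε : ℝ := δ / (c * n + 1) with hε
  have hεpos : 0 < ε := div_pos hδ (by positivity)
  have hden : ∀ t, 0 < fiberPr m g t + n * ε := fun t =>
    add_pos_of_nonneg_of_pos (fiberPr_nonneg m g hm t) (by positivity)
  refine ⟨fun t z => (fiberW m g t z + ε) / (fiberPr m g t + n * ε), ?_, ?_, ?_⟩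
  · intro t z
    exact div_pos (add_pos_of_nonneg_of_pos (fiberW_nonneg m g hm t z) hεpos) (hden t)
  · intro t
    rw [← Finset.sum_div, Finset.sum_add_distrib, Finset.sum_const, Finset.card_univ,
      nsmul_eq_mul, ← fiberPr_eq_sum_W, ← hn, div_self (hden t).ne']
  · rw [regroup m g (fun t z => -Real.log ((fiberW m g t z + ε) / (fiberPr m g t + n * ε))),
      condEnt_eq m g hm hfib]
    have hper : ∀ t ∈ Finset.image g Finset.univ,
        ∑ z, fiberW m g t z * (-Real.log ((fiberW m g t z + ε) / (fiberPr m g t + n * ε)))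
        ≤ (∑ z, fiberW m g t z * (-Real.log (fiberW m g t z / fiberPr m g t))) + n * ε := by
      intro t ht
      set s : ℝ := fiberPr m g t with hsdef
      have hs : 0 < s := fiberPr_pos_of_mem m g hm hfib ht
      have hpt : ∀ z, fiberW m g t z * (-Real.log ((fiberW m g t z + ε) / (s + n * ε)))
          ≤ fiberW m g t z * (-Real.log (fiberW m g t z / s))
            + fiberW m g t z * (n * ε / s) := by
        intro z
        set W : ℝ := fiberW m g t z with hW
        rcases eq_or_lt_of_le (fiberW_nonneg m g hm t z) with h0 | h0
        · rw [← hW] at h0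
          rw [← h0]
          simp
        · rw [← hW] at h0
          have l1 : Real.log (W / (s + n * ε)) ≤ Real.log ((W + ε) / (s + n * ε)) := by
            apply Real.log_le_log (by positivity)
            gcongr
            linarith
          have l2 : Real.log (W / (s + n * ε))
              = Real.log (W / s) - Real.log ((s + n * ε) / s) := by
            rw [Real.log_div h0.ne' (by positivity : (0:ℝ) < s + n * ε).ne',
              Real.log_div h0.ne' hs.ne',
              Real.log_div (by positivity : (0:ℝ) < s + n * ε).ne' hs.ne']
            ring
          have l3 : Real.log ((s + n * ε) / s) ≤ n * ε / s := by
            have := Real.log_le_sub_one_of_pos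
              (show 0 < (s + n * ε) / s by positivity)
            have he : (s + n * ε) / s - 1 = n * ε / s := by
              field_simp
              ring
            linarith
          have l4 : -Real.log ((W + ε) / (s + n * ε))
              ≤ -Real.log (W / s) + n * ε / s := by linarith
          nlinarith [mul_le_mul_of_nonneg_left l4 h0.le]
      calc ∑ z, fiberW m g t z * (-Real.log ((fiberW m g t z + ε) / (s + n * ε)))
          ≤ ∑ z, (fiberW m g t z * (-Real.log (fiberW m g t z / s))
              + fiberW m g t z * (n * ε / s)) := Finset.sum_le_sum fun z _ => hpt z
        _ = (∑ z, fiberW m g t z * (-Real.log (fiberW m g t z / s)))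
              + (∑ z, fiberW m g t z) * (n * ε / s) := by
            rw [Finset.sum_add_distrib, Finset.sum_mul]
        _ = (∑ z, fiberW m g t z * (-Real.log (fiberW m g t z / s))) + n * ε := by
            rw [← fiberPr_eq_sum_W, ← hsdef]
            field_simp
    calc ∑ t ∈ Finset.image g Finset.univ, ∑ z,
          fiberW m g t z * (-Real.log ((fiberW m g t z + ε) / (fiberPr m g t + n * ε)))
        ≤ ∑ t ∈ Finset.image g Finset.univ,
            ((∑ z, fiberW m g t z * (-Real.log (fiberW m g t z / fiberPr m g t))) + n * ε) :=
          Finset.sum_le_sum hper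
      _ = (∑ t ∈ Finset.image g Finset.univ, ∑ z,
            fiberW m g t z * (-Real.log (fiberW m g t z / fiberPr m g t))) + c * (n * ε) := by
          rw [Finset.sum_add_distrib, Finset.sum_const, nsmul_eq_mul, ← hc]
      _ ≤ (∑ t ∈ Finset.image g Finset.univ, ∑ z,
            fiberW m g t z * (-Real.log (fiberW m g t z / fiberPr m g t))) + δ := by
          have hmul : ε * (c * n + 1) = δ := div_mul_cancel₀ δ (by positivity)
          nlinarith [hεpos]

/-- Conditional entropy is invariant under refining a grouping by a function of it. -/
lemma condEnt_comp {S : Type*} [DecidableEq S] (m : X × Z → ℝ) (g : X → T) (h : T → S) :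
    condEnt m (fun x => (g x, h (g x))) = condEnt m g := by
  set g' : X → T × S := fun x => (g x, h (g x)) with hg'
  have hcond : ∀ t (x : X), (g' x = (t, h t)) ↔ (g x = t) := by
    intro t x
    constructor
    · intro hx
      exact congrArg Prod.fst hx
    · intro hx
      simp [hg', hx]
  have e1 : ∀ t z, (∑ x, if g' x = (t, h t) then m (x, z) else 0)
      = ∑ x, if g x = t then m (x, z) else 0 := by
    intro t z
    refine Finset.sum_congr rfl fun x _ => ?_
    by_cases hx : g x = t
    · rw [if_pos hx, if_pos ((hcond t x).mpr hx)]
    · rw [if_neg hx, if_neg (fun hc => hx ((hcond t x).mp hc))]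
  have e0 : ∀ t, fiberPr m g' (t, h t) = fiberPr m g t := by
    intro t
    rw [fiberPr_eq_sum_W, fiberPr_eq_sum_W]
    exact Finset.sum_congr rfl fun z _ => e1 t z
  have e2 : ∀ t z, fiberCond m g' (t, h t) z = fiberCond m g t z := by
    intro t z
    rw [fiberCond, fiberCond, e0 t, e1 t z]
  have himg : Finset.image g' Finset.univ
      = (Finset.image g Finset.univ).image (fun t => (t, h t)) := by
    rw [Finset.image_image]
    rfl
  rw [condEnt, condEnt, himg,
    Finset.sum_image (fun a _ b _ hab => congrArg Prod.fst hab)]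
  refine Finset.sum_congr rfl fun t _ => ?_
  rw [e0 t]
  congr 1
  refine Finset.sum_congr rfl fun z _ => ?_
  rw [e2 t z]

/-- Value of the inner supremum over discriminators. -/
lemma sSup_cross [Nonempty Z] (m : X × Z → ℝ) (g : X → T) (hm : ∀ p, 0 ≤ m p)
    (hfib : ∀ x, 0 < ∑ z, m (x, z)) (a lam : ℝ) (hlam : 0 < lam) :
    sSup { w : ℝ | ∃ D : T → Z → ℝ,
        ((∀ c z, 0 < D c z) ∧ (∀ c, ∑ z, D c z = 1)) ∧
        w = a - lam * (∑ x, ∑ z, m (x, z) * (-Real.log (D (g x) z))) }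
      = a - lam * condEnt m g := by
  set Sx := { w : ℝ | ∃ D : T → Z → ℝ,
        ((∀ c z, 0 < D c z) ∧ (∀ c, ∑ z, D c z = 1)) ∧
        w = a - lam * (∑ x, ∑ z, m (x, z) * (-Real.log (D (g x) z))) } with hSx
  have hub : ∀ w ∈ Sx, w ≤ a - lam * condEnt m g := by
    rintro w ⟨D, ⟨hD, hD1⟩, rfl⟩
    have h1 := condEnt_le_cross m g hm hfib D hD hD1
    nlinarith
  have hne : Sx.Nonempty := by
    obtain ⟨K, hK, hK1, _⟩ := cross_approx m g hm hfib one_pos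
    exact ⟨_, K, ⟨hK, hK1⟩, rfl⟩
  have hbdd : BddAbove Sx := ⟨a - lam * condEnt m g, hub⟩
  refine le_antisymm (csSup_le hne hub) (le_of_forall_pos_le_add ?_)
  intro δ hδ
  obtain ⟨K, hK, hK1, hKb⟩ := cross_approx m g hm hfib (div_pos hδ hlam)
  have hmem : a - lam * (∑ x, ∑ z, m (x, z) * (-Real.log (K (g x) z))) ∈ Sx :=
    ⟨K, ⟨hK, hK1⟩, rfl⟩
  have h1 := le_csSup hbdd hmem
  have h2 : lam * (∑ x, ∑ z, m (x, z) * (-Real.log (K (g x) z)))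
      ≤ lam * condEnt m g + δ := by
    have h3 := mul_le_mul_of_nonneg_left hKb hlam.le
    have h4 : lam * (condEnt m g + δ / lam) = lam * condEnt m g + δ := by
      field_simp
    linarith
  linarith

/-- Value of the outer infimum over predictors. -/
lemma sInf_cross [Nonempty Z] (m : X × Z → ℝ) (g : X → T) (hm : ∀ p, 0 ≤ m p)
    (hfib : ∀ x, 0 < ∑ z, m (x, z)) (b : ℝ) :
    sInf { v : ℝ | ∃ P : T → Z → ℝ,
        ((∀ t z, 0 < P t z) ∧ (∀ t, ∑ z, P t z = 1)) ∧
        v = (∑ x, ∑ z, m (x, z) * (-Real.log (P (g x) z))) - b }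
      = condEnt m g - b := by
  set Sx := { v : ℝ | ∃ P : T → Z → ℝ,
        ((∀ t z, 0 < P t z) ∧ (∀ t, ∑ z, P t z = 1)) ∧
        v = (∑ x, ∑ z, m (x, z) * (-Real.log (P (g x) z))) - b } with hSx
  have hlb : ∀ v ∈ Sx, condEnt m g - b ≤ v := by
    rintro v ⟨P, ⟨hP, hP1⟩, rfl⟩
    have h1 := condEnt_le_cross m g hm hfib P hP hP1
    linarith
  have hne : Sx.Nonempty := by
    obtain ⟨K, hK, hK1, _⟩ := cross_approx m g hm hfib one_pos
    exact ⟨_, K, ⟨hK, hK1⟩, rfl⟩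
  have hbdd : BddBelow Sx := ⟨condEnt m g - b, hlb⟩
  refine le_antisymm (le_of_forall_pos_le_add ?_) (le_csInf hne hlb)
  intro δ hδ
  obtain ⟨K, hK, hK1, hKb⟩ := cross_approx m g hm hfib hδ
  have hmem : (∑ x, ∑ z, m (x, z) * (-Real.log (K (g x) z))) - b ∈ Sx :=
    ⟨K, ⟨hK, hK1⟩, rfl⟩
  have h1 := csInf_le hbdd hmem
  linarith

end Aux

/-- Minimizing the value function over predictors `P` after maximizing over
discriminators `D` yields the virtual value function
`V(E) = H(y|E(x)) − λ·H(z | E(x), q_y(·|E(x)))`. -/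
theorem minimax_eq_virtual_value
    {X Y Z F : Type*} [Fintype X] [Fintype Y] [Fintype Z] [Fintype F]
    [Nonempty X] [Nonempty Y] [Nonempty Z] [Nonempty F]
    [DecidableEq F] [DecidableEq (Y → ℝ)]
    (q : X × Y × Z → ℝ) (hq0 : ∀ p, 0 ≤ q p) (hq1 : ∑ p, q p = 1)
    (hpos : ∀ x, 0 < ∑ y, ∑ z, q (x, y, z))
    (qXY : X × Y → ℝ) (hqXY : ∀ x y, qXY (x, y) = ∑ z, q (x, y, z))
    (qXZ : X × Z → ℝ) (hqXZ : ∀ x z, qXZ (x, z) = ∑ y, q (x, y, z))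
    (E : X → F) (lam : ℝ) (hlam : 0 < lam) :
    sInf { v : ℝ | ∃ P : F → Y → ℝ,
        ((∀ e y, 0 < P e y) ∧ (∀ e, ∑ y, P e y = 1)) ∧
        v = sSup { w : ℝ | ∃ D : F × (Y → ℝ) → Z → ℝ,
          ((∀ c z, 0 < D c z) ∧ (∀ c, ∑ z, D c z = 1)) ∧
          w = (∑ x, ∑ y, qXY (x, y) * (-Real.log (P (E x) y))) -
            lam * (∑ x, ∑ z, qXZ (x, z) *
              (-Real.log (D (E x, P (E x)) z))) } } =
      condEnt qXY E -
        lam * condEnt qXZ (fun x => (E x, fiberCond qXY E (E x))) := by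
  have hqXYnn : ∀ p, 0 ≤ qXY p := by
    rintro ⟨x, y⟩
    rw [hqXY]
    exact Finset.sum_nonneg fun z _ => hq0 _
  have hqXZnn : ∀ p, 0 ≤ qXZ p := by
    rintro ⟨x, z⟩
    rw [hqXZ]
    exact Finset.sum_nonneg fun y _ => hq0 _
  have hfibY : ∀ x, 0 < ∑ y, qXY (x, y) := by
    intro x
    simp only [hqXY]
    exact hpos x
  have hfibZ : ∀ x, 0 < ∑ z, qXZ (x, z) := by
    intro x
    simp only [hqXZ]
    rw [Finset.sum_comm]
    exact hpos x
  have key : ∀ P : F → Y → ℝ, (∀ e y, 0 < P e y) → (∀ e, ∑ y, P e y = 1) →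
      sSup { w : ℝ | ∃ D : F × (Y → ℝ) → Z → ℝ,
          ((∀ c z, 0 < D c z) ∧ (∀ c, ∑ z, D c z = 1)) ∧
          w = (∑ x, ∑ y, qXY (x, y) * (-Real.log (P (E x) y))) -
            lam * (∑ x, ∑ z, qXZ (x, z) *
              (-Real.log (D (E x, P (E x)) z))) }
        = (∑ x, ∑ y, qXY (x, y) * (-Real.log (P (E x) y)))
            - lam * condEnt qXZ E := by
    intro P _ _
    have h := sSup_cross qXZ (fun x => (E x, P (E x))) hqXZnn hfibZ
      (∑ x, ∑ y, qXY (x, y) * (-Real.log (P (E x) y))) lam hlam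
    rw [condEnt_comp qXZ E P] at h
    exact h
  have hset : { v : ℝ | ∃ P : F → Y → ℝ,
        ((∀ e y, 0 < P e y) ∧ (∀ e, ∑ y, P e y = 1)) ∧
        v = sSup { w : ℝ | ∃ D : F × (Y → ℝ) → Z → ℝ,
          ((∀ c z, 0 < D c z) ∧ (∀ c, ∑ z, D c z = 1)) ∧
          w = (∑ x, ∑ y, qXY (x, y) * (-Real.log (P (E x) y))) -
            lam * (∑ x, ∑ z, qXZ (x, z) *
              (-Real.log (D (E x, P (E x)) z))) } }
      = { v : ℝ | ∃ P : F → Y → ℝ,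
        ((∀ e y, 0 < P e y) ∧ (∀ e, ∑ y, P e y = 1)) ∧
        v = (∑ x, ∑ y, qXY (x, y) * (-Real.log (P (E x) y)))
            - lam * condEnt qXZ E } := by
    ext v
    simp only [Set.mem_setOf_eq]
    exact exists_congr fun P =>
      and_congr_right fun hP => by rw [key P hP.1 hP.2]
  rw [hset, condEnt_comp qXZ E (fiberCond qXY E)]
  exact sInf_cross qXY E hqXYnn hfibY (lam * condEnt qXZ E)
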